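/- Let Γ be a complete digraph, A an abelian group, and w : E(Γ) → A a weighting of the directed edges with no zero-sum directed cycle. Let v₀ be a vertex of Γ. Then there exists a weighting w' : E(Γ) → A such that: w'(v₀u) = 0 for every vertex u ≠ v₀; there are no zero-sum directed cycles with respect to w'; and every gadget g in Γ has the same value with respect to both w and w'. -/

import Mathlib

/-- The weight of a walk along the list of vertices `l`, with respect to the
edge-weighting `w` of a complete digraph on vertex set `V`. -/
def pathWeight {V A : Type*} [AddCommGroup A] (w : V → V → A) (l : List V) : A :=
  (List.zipWith w l l.tail).sum

/-- A complete digraph (all ordered pairs of distinct vertices being directed edges)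
with edge-weighting `w` has a zero-sum directed cycle: there is a list of at
least two distinct vertices such that the weights of the consecutive directed
edges traversed cyclically sum to zero. -/
def HasZeroSumCycle {V A : Type*} [AddCommGroup A] (w : V → V → A) : Prop :=
  ∃ (a : V) (l : List V), l ≠ [] ∧ (a :: l).Nodup ∧ pathWeight w ((a :: l) ++ [a]) = 0

/-- A gadget in a complete digraph on vertex set `V`, rooted at an ordered pair
`(u, v)` of distinct vertices: a pair of directed paths `P`, `Q` (lists of distinct
vertices), each from `u` to `v`. -/
structure Gadget (V : Type*) where
  u : V
  v : V
  P : List V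
  Q : List V
  hne : u ≠ v
  hPnodup : P.Nodup
  hQnodup : Q.Nodup
  hPhead : P.head? = some u
  hPlast : P.getLast? = some v
  hQhead : Q.head? = some u
  hQlast : Q.getLast? = some v

/-- The vertex set of a gadget: `V(g) = V(P) ∪ V(Q)`. -/
def Gadget.vertexSet {V : Type*} [DecidableEq V] (g : Gadget V) : Finset V :=
  g.P.toFinset ∪ g.Q.toFinset

/-- The value of a gadget: `g* = w(Q) - w(P)`. -/
def Gadget.value {V A : Type*} [AddCommGroup A] (w : V → V → A) (g : Gadget V) : A :=
  pathWeight w g.Q - pathWeight w g.P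

/-- If `w` is a weighting of a complete digraph `Γ` with no zero-sum directed cycle
and `v₀` is a vertex, then there is a weighting `w'` such that all edges leaving
`v₀` have weight `0`, there are no zero-sum directed cycles with respect to `w'`,
and every gadget in `Γ` has the same value with respect to `w` and `w'`. -/
lemma pathWeight_shift {V A : Type*} [AddCommGroup A] (w : V → V → A) (f : V → A) :
    ∀ (l : List V) (x : V), pathWeight (fun a b => w a b + f a - f b) (x :: l)
      = pathWeight w (x :: l) + f x - f ((x :: l).getLast (List.cons_ne_nil _ _))
  | [], x => by simp [pathWeight]
  | y :: t, x => by
    have ih := pathWeight_shift w f t y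
    simp only [pathWeight, List.tail_cons, List.zipWith_cons_cons, List.sum_cons] at ih ⊢
    rw [List.getLast_cons (List.cons_ne_nil _ _), ih]
    abel

theorem exists_weighting_zero_at_vertex {V A : Type*} [AddCommGroup A]
    (w : V → V → A) (hw : ¬ HasZeroSumCycle w) (v₀ : V) :
    ∃ w' : V → V → A,
      (∀ u : V, u ≠ v₀ → w' v₀ u = 0) ∧
      ¬ HasZeroSumCycle w' ∧
      ∀ g : Gadget V, g.value w' = g.value w := by
  classical
  set f : V → A := fun u => if u = v₀ then 0 else w v₀ u with hf
  refine ⟨fun a b => w a b + f a - f b, ?_, ?_, ?_⟩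
  · intro u hu
    simp [hf, hu]
  · intro ⟨a, l, hl, hnd, hsum⟩
    apply hw
    refine ⟨a, l, hl, hnd, ?_⟩
    rw [List.cons_append, pathWeight_shift] at hsum
    rw [List.getLast_cons (by simp)] at hsum
    have hla : (l ++ [a]).getLast (by simp) = a := List.getLast_append _
    rw [hla, add_sub_cancel_right, ← List.cons_append] at hsum
    exact hsum
  · intro g
    obtain ⟨p, P', hP⟩ : ∃ p P', g.P = p :: P' := by
      cases h : g.P with
      | nil => exact absurd (h ▸ g.hPhead) (by simp)
      | cons p P' => exact ⟨p, P', rfl⟩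
    obtain ⟨q, Q', hQ⟩ : ∃ q Q', g.Q = q :: Q' := by
      cases h : g.Q with
      | nil => exact absurd (h ▸ g.hQhead) (by simp)
      | cons q Q' => exact ⟨q, Q', rfl⟩
    have hp : p = g.u := by simpa [hP] using g.hPhead
    have hq : q = g.u := by simpa [hQ] using g.hQhead
    subst hp; subst hq
    have hpl : (g.u :: P').getLast (List.cons_ne_nil _ _) = g.v := by
      have := g.hPlast
      rw [hP, List.getLast?_eq_getLast (List.cons_ne_nil _ _), Option.some_inj] at this
      exact this
    have hql : (g.u :: Q').getLast (List.cons_ne_nil _ _) = g.v := by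
      have := g.hQlast
      rw [hQ, List.getLast?_eq_getLast (List.cons_ne_nil _ _), Option.some_inj] at this
      exact this
    simp only [Gadget.value, hP, hQ, pathWeight_shift, hpl, hql]
    abel
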